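/- Under the hypotheses of the singularity criterion (0 < α < 1/2, q : ℤ_{≥0} → ℤ_{>0} with q(0)=1, q(s₁)q(s₂−1) < q(s₁+s₂) ≤ q(s₁)q(s₂), q(s+1)α^{s+2} < q(s)α^{s+1} < Σ_{i=s+2}^∞ q(i−1)α^i, and Σ_{i=1}^∞ q(i−1)α^i = 1), the function f(x) = Σ_{i=1}^∞ x_i·r(x)_i·α^i (with r(x)_i = Π_s q(s)^{p_{i,s}} counting runs of 1s in the first i−1 binary digits) is continuous on [0,1]. -/

import Mathlib

/-- The `i`-th binary digit of `x` (indices from 1), using the terminating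
(floor) expansion at dyadic rationals. -/
noncomputable def binDigit (x : ℝ) (i : ℕ) : ℕ := ⌊x * 2 ^ i⌋.toNat % 2

/-- `runCount b i s`: the number of maximal runs of exactly `s` consecutive 1s
among the digits `b 1, …, b (i-1)`. -/
def runCount (b : ℕ → ℕ) (i s : ℕ) : ℕ :=
  ((Finset.Icc 1 i).filter fun m =>
    m + s ≤ i ∧ (∀ t ∈ Finset.Ico m (m + s), b t = 1) ∧
      (m = 1 ∨ b (m - 1) = 0) ∧ (m + s = i ∨ b (m + s) = 0)).card

/-- `r(x)_i = Π_s q(s)^{p_{i,s}}` where `p_{i,s}` counts maximal runs of `s`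
consecutive 1s among the first `i-1` binary digits (`q 0 = 1`, so the factor
`s = 0` is omitted). -/
noncomputable def rWeight (q : ℕ → ℕ) (b : ℕ → ℕ) (i : ℕ) : ℝ :=
  ∏ s ∈ Finset.Icc 1 i, (q s : ℝ) ^ runCount b i s

/-- `f(x) = Σ_{i≥1} x_i · r(x)_i · α^i` (with `f 1 = 1`, corresponding to the
all-ones expansion of `1`). -/
noncomputable def fCA (α : ℝ) (q : ℕ → ℕ) (x : ℝ) : ℝ :=
  if x = 1 then 1 else
    ∑' i : ℕ, (binDigit x (i + 1) : ℝ) * rWeight q (binDigit x) (i + 1) * α ^ (i + 1)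

namespace CA

lemma runCount_congr {b c : ℕ → ℕ} {i : ℕ} (h : ∀ t, 1 ≤ t → t < i → b t = c t)
    (s : ℕ) : runCount b i s = runCount c i s := by
  unfold runCount
  congr 1
  apply Finset.filter_congr
  intro m hm
  simp only [Finset.mem_Icc] at hm
  obtain ⟨hm1, hmi⟩ := hm
  constructor
  · rintro ⟨h1, h2, h3, h4⟩
    refine ⟨h1, ?_, ?_, ?_⟩
    · intro t ht
      simp only [Finset.mem_Ico] at ht
      rw [← h t (le_trans hm1 ht.1) (lt_of_lt_of_le ht.2 h1)]
      exact h2 t (Finset.mem_Ico.mpr ht)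
    · rcases h3 with h3 | h3
      · exact Or.inl h3
      · rcases Nat.eq_or_lt_of_le hm1 with he | hl
        · exact Or.inl he.symm
        · exact Or.inr (by rw [← h (m-1) (by omega) (by omega)]; exact h3)
    · rcases h4 with h4 | h4
      · exact Or.inl h4
      · rcases Nat.eq_or_lt_of_le h1 with he | hl
        · exact Or.inl he
        · exact Or.inr (by rw [← h (m+s) (by omega) (by omega)]; exact h4)
  · rintro ⟨h1, h2, h3, h4⟩
    refine ⟨h1, ?_, ?_, ?_⟩
    · intro t ht
      simp only [Finset.mem_Ico] at ht
      rw [h t (le_trans hm1 ht.1) (lt_of_lt_of_le ht.2 h1)]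
      exact h2 t (Finset.mem_Ico.mpr ht)
    · rcases h3 with h3 | h3
      · exact Or.inl h3
      · rcases Nat.eq_or_lt_of_le hm1 with he | hl
        · exact Or.inl he.symm
        · exact Or.inr (by rw [h (m-1) (by omega) (by omega)]; exact h3)
    · rcases h4 with h4 | h4
      · exact Or.inl h4
      · rcases Nat.eq_or_lt_of_le h1 with he | hl
        · exact Or.inl he
        · exact Or.inr (by rw [h (m+s) (by omega) (by omega)]; exact h4)

lemma rWeight_congr (q : ℕ → ℕ) {b c : ℕ → ℕ} {i : ℕ}
    (h : ∀ t, 1 ≤ t → t < i → b t = c t) : rWeight q b i = rWeight q c i := by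
  unfold rWeight
  exact Finset.prod_congr rfl fun s _ => by rw [runCount_congr h s]

lemma runCount_eq_zero {b : ℕ → ℕ} {i s : ℕ} (h : i ≤ s) : runCount b i s = 0 := by
  unfold runCount
  rw [Finset.card_eq_zero, Finset.filter_eq_empty_iff]
  intro m hm
  simp only [Finset.mem_Icc] at hm
  rintro ⟨h1, -⟩
  omega

lemma rWeight_one (q b : ℕ → ℕ) : rWeight q b 1 = 1 := by
  unfold rWeight
  apply Finset.prod_eq_one
  intro s hs
  simp only [Finset.mem_Icc] at hs
  rw [runCount_eq_zero (by omega), pow_zero]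

lemma runCount_succ_zero {b : ℕ → ℕ} {i : ℕ} (hi : 1 ≤ i) (h0 : b i = 0)
    {s : ℕ} (hs : 1 ≤ s) : runCount b (i + 1) s = runCount b i s := by
  unfold runCount
  congr 1
  ext m
  simp only [Finset.mem_filter, Finset.mem_Icc]
  constructor
  · rintro ⟨⟨hm1, hmi⟩, h1, h2, h3, h4⟩
    have hne : m + s ≠ i + 1 := by
      intro he
      have : b i = 1 := h2 i (Finset.mem_Ico.mpr ⟨by omega, by omega⟩)
      omega
    have h1' : m + s ≤ i := by omega
    refine ⟨⟨hm1, by omega⟩, h1', h2, h3, ?_⟩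
    rcases h4 with h4 | h4
    · omega
    · exact Or.inr h4
  · rintro ⟨⟨hm1, hmi⟩, h1, h2, h3, h4⟩
    refine ⟨⟨hm1, by omega⟩, by omega, h2, h3, ?_⟩
    rcases h4 with h4 | h4
    · exact Or.inr (h4 ▸ h0)
    · exact Or.inr h4

lemma rWeight_succ_zero (q : ℕ → ℕ) {b : ℕ → ℕ} {i : ℕ} (hi : 1 ≤ i) (h0 : b i = 0) :
    rWeight q b (i + 1) = rWeight q b i := by
  unfold rWeight
  rw [← Finset.prod_subset (Finset.Icc_subset_Icc_right (by omega) :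
      Finset.Icc 1 i ⊆ Finset.Icc 1 (i+1))]
  · exact Finset.prod_congr rfl fun s hs => by
      simp only [Finset.mem_Icc] at hs
      rw [runCount_succ_zero hi h0 hs.1]
  · intro s hs hns
    simp only [Finset.mem_Icc] at hs hns
    have : s = i + 1 := by omega
    rw [this, runCount_eq_zero (by omega), pow_zero]

/-- main run lemma: if there is a run of ones from `a` to `i`, then counting
runs among the first `i` digits equals counting among the first `a-1` digits
plus a run of length `i+1-a`. -/
lemma runCount_run {b : ℕ → ℕ} {a i : ℕ} (ha1 : 1 ≤ a) (hai : a ≤ i)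
    (hleft : a = 1 ∨ b (a - 1) = 0) (hones : ∀ t, a ≤ t → t ≤ i → b t = 1)
    {s : ℕ} (hs : 1 ≤ s) :
    runCount b (i + 1) s = runCount b a s + if a + s = i + 1 then 1 else 0 := by
  unfold runCount
  have hnotmem : ∀ (p : ℕ → Prop) [DecidablePred p], a ∉ (Finset.Icc 1 a).filter
      (fun m => m + s ≤ a ∧ p m) := by
    intro p _ hmem
    simp only [Finset.mem_filter, Finset.mem_Icc] at hmem
    omega
  have key : ((Finset.Icc 1 (i+1)).filter fun m =>
      m + s ≤ i + 1 ∧ (∀ t ∈ Finset.Ico m (m + s), b t = 1) ∧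
      (m = 1 ∨ b (m - 1) = 0) ∧ (m + s = i + 1 ∨ b (m + s) = 0)) =
      (if a + s = i + 1 then {a} else ∅) ∪ ((Finset.Icc 1 a).filter fun m =>
      m + s ≤ a ∧ (∀ t ∈ Finset.Ico m (m + s), b t = 1) ∧
      (m = 1 ∨ b (m - 1) = 0) ∧ (m + s = a ∨ b (m + s) = 0)) := by
    ext m
    simp only [Finset.mem_union, Finset.mem_filter, Finset.mem_Icc]
    constructor
    · rintro ⟨⟨hm1, hmi⟩, h1, h2, h3, h4⟩
      rcases le_or_gt a m with hcase | hcase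
      · -- m ≥ a forces m = a and s = i + 1 - a
        have hma : m = a := by
          by_contra hne
          have hmgt : a < m := by omega
          have : b (m - 1) = 1 := hones (m-1) (by omega) (by omega)
          rcases h3 with h3 | h3 <;> omega
        subst hma
        have hsval : m + s = i + 1 := by
          by_contra hne
          have hle : m + s ≤ i := by omega
          have hb1 : b (m + s) = 1 := hones (m+s) (by omega) hle
          rcases h4 with h4 | h4 <;> omega
        left
        simp [hsval]
      · -- m < a : run lies before a
        right
        have hms : m + s ≤ a - 1 := by
          by_contra hgt
          have hin : a - 1 ∈ Finset.Ico m (m + s) := Finset.mem_Ico.mpr ⟨by omega, by omega⟩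
          have hb1 : b (a - 1) = 1 := h2 _ hin
          rcases hleft with h | h <;> omega
        have hb0 : b (m + s) = 0 := by
          rcases h4 with h4 | h4
          · omega
          · exact h4
        exact ⟨⟨hm1, by omega⟩, by omega, h2, h3, Or.inr hb0⟩
    · rintro (hmem | ⟨⟨hm1, hma⟩, h1, h2, h3, h4⟩)
      · -- the new run
        split_ifs at hmem with hcond
        · simp only [Finset.mem_singleton] at hmem
          subst hmem
          refine ⟨⟨ha1, by omega⟩, by omega, ?_, hleft, Or.inl hcond⟩
          intro t ht
          simp only [Finset.mem_Ico] at ht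
          exact hones t ht.1 (by omega)
        · simp at hmem
      · -- old runs
        have hms : m + s < a := by
          rcases h4 with h4 | h4
          · exfalso
            have hin : a - 1 ∈ Finset.Ico m (m + s) := Finset.mem_Ico.mpr ⟨by omega, by omega⟩
            have hb1 : b (a - 1) = 1 := h2 _ hin
            rcases hleft with h | h <;> omega
          · rcases Nat.eq_or_lt_of_le h1 with he | hl
            · exfalso
              have hin : a - 1 ∈ Finset.Ico m (m + s) := Finset.mem_Ico.mpr ⟨by omega, by omega⟩
              have hb1 : b (a - 1) = 1 := h2 _ hin
              rcases hleft with h | h <;> omega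
            · omega
        have hb0 : b (m + s) = 0 := by
          rcases h4 with h4 | h4
          · omega
          · exact h4
        exact ⟨⟨hm1, by omega⟩, by omega, h2, h3, Or.inr hb0⟩
  rw [key, Finset.card_union_of_disjoint]
  · split_ifs with hcond
    · rw [Finset.card_singleton]; omega
    · simp
  · split_ifs with hcond
    · rw [Finset.disjoint_singleton_left]
      exact hnotmem _
    · exact Finset.disjoint_empty_left _

lemma rWeight_run (q : ℕ → ℕ) {b : ℕ → ℕ} {a i : ℕ} (ha1 : 1 ≤ a) (hai : a ≤ i)
    (hleft : a = 1 ∨ b (a - 1) = 0) (hones : ∀ t, a ≤ t → t ≤ i → b t = 1) :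
    rWeight q b (i + 1) = rWeight q b a * (q (i + 1 - a) : ℝ) := by
  unfold rWeight
  have hsub : Finset.Icc 1 a ⊆ Finset.Icc 1 (i + 1) :=
    Finset.Icc_subset_Icc_right (by omega)
  have step1 : ∀ s ∈ Finset.Icc 1 (i+1),
      (q s : ℝ) ^ runCount b (i+1) s =
      (q s : ℝ) ^ runCount b a s * (q s : ℝ) ^ (if a + s = i + 1 then 1 else 0) := by
    intro s hs
    simp only [Finset.mem_Icc] at hs
    rw [runCount_run ha1 hai hleft hones hs.1, pow_add]
  rw [Finset.prod_congr rfl step1, Finset.prod_mul_distrib]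
  congr 1
  · symm
    apply Finset.prod_subset hsub
    intro s hs hns
    simp only [Finset.mem_Icc] at hs hns
    rw [runCount_eq_zero (by omega), pow_zero]
  · rw [Finset.prod_eq_single (i + 1 - a)]
    · have : a + (i + 1 - a) = i + 1 := by omega
      simp [this]
    · intro s hs hne
      have : ¬ (a + s = i + 1) := by omega
      simp [this]
    · intro hnot
      exfalso
      apply hnot
      simp only [Finset.mem_Icc]
      omega

lemma rWeight_ge_one (q b : ℕ → ℕ) (hq : ∀ s, 1 ≤ q s) (i : ℕ) : 1 ≤ rWeight q b i := by
  unfold rWeight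
  have := Finset.prod_le_prod (s := Finset.Icc 1 i) (f := fun _ => (1:ℝ))
    (g := fun s => (q s : ℝ) ^ runCount b i s) (by intros; norm_num)
    (fun s _ => one_le_pow₀ (by exact_mod_cast hq s))
  simpa using this

lemma exists_runStart {b : ℕ → ℕ} (hb : ∀ t, b t ≤ 1) :
    ∀ i, 1 ≤ i → b i = 1 →
    ∃ a, 1 ≤ a ∧ a ≤ i ∧ (a = 1 ∨ b (a - 1) = 0) ∧ ∀ t, a ≤ t → t ≤ i → b t = 1 := by
  intro i
  induction i with
  | zero => omega
  | succ n ih =>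
    intro _ h1
    rcases Nat.eq_zero_or_pos n with hn | hn
    · subst hn
      exact ⟨1, le_refl 1, le_refl 1, Or.inl rfl, fun t ht1 ht2 => by
        have : t = 1 := by omega
        rwa [this]⟩
    · rcases Nat.lt_or_ge (b n) 1 with hbn | hbn
      · -- b n = 0
        refine ⟨n + 1, by omega, le_refl _, Or.inr (by simp only [Nat.add_sub_cancel]; omega), ?_⟩
        intro t ht1 ht2
        have : t = n + 1 := by omega
        rwa [this]
      · -- b n = 1
        have hbn1 : b n = 1 := le_antisymm (hb n) hbn
        obtain ⟨a, ha1, han, hleft, hones⟩ := ih hn hbn1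
        refine ⟨a, ha1, by omega, hleft, ?_⟩
        intro t ht1 ht2
        rcases Nat.lt_or_ge t (n + 1) with h | h
        · exact hones t ht1 (by omega)
        · have : t = n + 1 := by omega
          rwa [this]

end CA

namespace CA
variable {q : ℕ → ℕ}

lemma q_mono (hq0 : q 0 = 1) (hqpos : ∀ s, 0 < q s)
    (hqb : ∀ s₁ s₂ : ℕ, 0 < s₁ → 0 < s₂ →
      q s₁ * q (s₂ - 1) < q (s₁ + s₂) ∧ q (s₁ + s₂) ≤ q s₁ * q s₂) :
    ∀ s, q s ≤ q (s + 1) := by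
  intro s
  rcases Nat.eq_zero_or_pos s with hs | hs
  · subst hs
    rw [hq0]
    exact hqpos 1
  · have := (hqb s 1 hs one_pos).1
    simp only [Nat.sub_self, hq0, mul_one] at this
    omega

lemma q_mono_le (hq0 : q 0 = 1) (hqpos : ∀ s, 0 < q s)
    (hqb : ∀ s₁ s₂ : ℕ, 0 < s₁ → 0 < s₂ →
      q s₁ * q (s₂ - 1) < q (s₁ + s₂) ∧ q (s₁ + s₂) ≤ q s₁ * q s₂) :
    ∀ {s t}, s ≤ t → q s ≤ q t := by
  intro s t hst
  induction t with
  | zero => have : s = 0 := by omega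
            simp [this]
  | succ n ih =>
    rcases Nat.lt_or_ge s (n + 1) with h | h
    · exact le_trans (ih (by omega)) (q_mono hq0 hqpos hqb n)
    · have : s = n + 1 := by omega
      simp [this]

lemma q_submul (hq0 : q 0 = 1) (hqpos : ∀ s, 0 < q s)
    (hqb : ∀ s₁ s₂ : ℕ, 0 < s₁ → 0 < s₂ →
      q s₁ * q (s₂ - 1) < q (s₁ + s₂) ∧ q (s₁ + s₂) ≤ q s₁ * q s₂) :
    ∀ x y, q x * q y ≤ q (x + y + 1) := by
  intro x y
  rcases Nat.eq_zero_or_pos x with hx | hx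
  · subst hx
    rw [hq0, one_mul]
    exact q_mono_le hq0 hqpos hqb (by omega)
  · have := (hqb x (y + 1) hx (by omega)).1
    simp only [Nat.add_sub_cancel] at this
    have he : x + (y + 1) = x + y + 1 := by omega
    rw [he] at this
    omega

/-- Key bound: `r_{i+1} ≤ q i`. -/
lemma rWeight_le (hq0 : q 0 = 1) (hqpos : ∀ s, 0 < q s)
    (hqb : ∀ s₁ s₂ : ℕ, 0 < s₁ → 0 < s₂ →
      q s₁ * q (s₂ - 1) < q (s₁ + s₂) ∧ q (s₁ + s₂) ≤ q s₁ * q s₂)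
    {b : ℕ → ℕ} (hb : ∀ t, b t ≤ 1) :
    ∀ i, rWeight q b (i + 1) ≤ (q i : ℝ) := by
  intro i
  induction i using Nat.strong_induction_on with
  | _ i ih =>
    rcases Nat.eq_zero_or_pos i with hi | hi
    · subst hi
      rw [rWeight_one, hq0]
      norm_num
    · rcases Nat.lt_or_ge (b i) 1 with hbi | hbi
      · -- b i = 0
        rw [rWeight_succ_zero q hi (by omega)]
        have h1 : rWeight q b ((i - 1) + 1) ≤ (q (i-1) : ℝ) := ih (i-1) (by omega)
        have h2 : (i - 1) + 1 = i := by omega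
        rw [h2] at h1
        exact le_trans h1 (by exact_mod_cast q_mono_le hq0 hqpos hqb (by omega : i - 1 ≤ i))
      · -- b i = 1
        have hbi1 : b i = 1 := le_antisymm (hb i) hbi
        obtain ⟨a, ha1, hai, hleft, hones⟩ := exists_runStart hb i hi hbi1
        rw [rWeight_run q ha1 hai hleft hones]
        rcases Nat.eq_or_lt_of_le ha1 with ha | ha
        · -- a = 1
          rw [← ha, rWeight_one, one_mul]
          have : i + 1 - 1 = i := by omega
          rw [this]
        · -- a ≥ 2
          have ha2 : 2 ≤ a := ha
          have hz : b (a - 1) = 0 := by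
            rcases hleft with h | h
            · omega
            · exact h
          have he1 : a = (a - 2 + 1) + 1 := by omega
          have he2 : a - 1 = (a - 2) + 1 := by omega
          have hra : rWeight q b a ≤ (q (a - 2) : ℝ) := by
            have hstep := rWeight_succ_zero q (b := b) (i := a - 1) (by omega) hz
            rw [show a - 1 + 1 = a by omega] at hstep
            rw [hstep]
            have hih := ih (a - 2) (by omega)
            rwa [show a - 2 + 1 = a - 1 by omega] at hih
          calc rWeight q b a * (q (i + 1 - a) : ℝ)
              ≤ (q (a - 2) : ℝ) * (q (i + 1 - a) : ℝ) := by
                apply mul_le_mul_of_nonneg_right hra (by positivity)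
            _ ≤ (q i : ℝ) := by
                have := q_submul hq0 hqpos hqb (a - 2) (i + 1 - a)
                have he : a - 2 + (i + 1 - a) + 1 = i := by omega
                rw [he] at this
                exact_mod_cast this

end CA

namespace CA

/-- The general term of the series defining `fCA`. -/
noncomputable def caTerm (α : ℝ) (q b : ℕ → ℕ) (i : ℕ) : ℝ :=
  (b (i + 1) : ℝ) * rWeight q b (i + 1) * α ^ (i + 1)

/-- Tail of the dominating series. -/
noncomputable def tailQ (α : ℝ) (q : ℕ → ℕ) (n : ℕ) : ℝ :=
  ∑' i : ℕ, (q (i + n) : ℝ) * α ^ (i + n + 1)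

variable {α : ℝ} {q : ℕ → ℕ}

lemma fCA_eq {x : ℝ} (hx : x ≠ 1) (α : ℝ) (q : ℕ → ℕ) :
    fCA α q x = ∑' i : ℕ, caTerm α q (binDigit x) i := by
  rw [fCA, if_neg hx]
  rfl

lemma summable_qa (hα0 : 0 < α) (hqd : ∑' j : ℕ, (q j : ℝ) * α ^ (j + 1) = 1) :
    Summable (fun j => (q j : ℝ) * α ^ (j + 1)) := by
  by_contra h
  rw [tsum_eq_zero_of_not_summable h] at hqd
  norm_num at hqd

lemma caTerm_nonneg (hα0 : 0 < α) (hqpos : ∀ s, 0 < q s) (b : ℕ → ℕ) (i : ℕ) :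
    0 ≤ caTerm α q b i := by
  unfold caTerm
  have h1 : (0:ℝ) ≤ rWeight q b (i + 1) :=
    le_trans zero_le_one (rWeight_ge_one q b hqpos (i + 1))
  positivity

lemma caTerm_le (hα0 : 0 < α) (hq0 : q 0 = 1) (hqpos : ∀ s, 0 < q s)
    (hqb : ∀ s₁ s₂ : ℕ, 0 < s₁ → 0 < s₂ →
      q s₁ * q (s₂ - 1) < q (s₁ + s₂) ∧ q (s₁ + s₂) ≤ q s₁ * q s₂)
    {b : ℕ → ℕ} (hb : ∀ t, b t ≤ 1) (i : ℕ) :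
    caTerm α q b i ≤ (q i : ℝ) * α ^ (i + 1) := by
  unfold caTerm
  have h1 : (0:ℝ) ≤ rWeight q b (i + 1) :=
    le_trans zero_le_one (rWeight_ge_one q b hqpos (i + 1))
  have h2 : rWeight q b (i + 1) ≤ (q i : ℝ) := rWeight_le hq0 hqpos hqb hb i
  have h3 : (b (i+1) : ℝ) ≤ 1 := by exact_mod_cast hb (i+1)
  have h4 : (0:ℝ) ≤ α ^ (i+1) := by positivity
  calc (b (i + 1) : ℝ) * rWeight q b (i + 1) * α ^ (i + 1)
      ≤ 1 * (q i : ℝ) * α ^ (i + 1) := by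
        apply mul_le_mul_of_nonneg_right _ h4
        exact mul_le_mul h3 h2 h1 zero_le_one
    _ = (q i : ℝ) * α ^ (i + 1) := by ring

lemma summable_caTerm (hα0 : 0 < α) (hq0 : q 0 = 1) (hqpos : ∀ s, 0 < q s)
    (hqb : ∀ s₁ s₂ : ℕ, 0 < s₁ → 0 < s₂ →
      q s₁ * q (s₂ - 1) < q (s₁ + s₂) ∧ q (s₁ + s₂) ≤ q s₁ * q s₂)
    (hqd : ∑' j : ℕ, (q j : ℝ) * α ^ (j + 1) = 1)
    {b : ℕ → ℕ} (hb : ∀ t, b t ≤ 1) :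
    Summable (fun i => caTerm α q b i) :=
  Summable.of_nonneg_of_le (caTerm_nonneg hα0 hqpos b)
    (caTerm_le hα0 hq0 hqpos hqb hb) (summable_qa hα0 hqd)

lemma tailQ_nonneg (hα0 : 0 < α) (hqpos : ∀ s, 0 < q s) (n : ℕ) : 0 ≤ tailQ α q n :=
  tsum_nonneg fun i => by positivity

lemma tailQ_tendsto : Filter.Tendsto (tailQ α q) Filter.atTop (nhds 0) :=
  tendsto_sum_nat_add fun j => (q j : ℝ) * α ^ (j + 1)

lemma tailQ_split (hα0 : 0 < α) (hqd : ∑' j : ℕ, (q j : ℝ) * α ^ (j + 1) = 1) (n : ℕ) :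
    ∑ i ∈ Finset.range n, (q i : ℝ) * α ^ (i + 1) + tailQ α q n = 1 := by
  rw [← hqd]
  exact Summable.sum_add_tsum_nat_add n (summable_qa hα0 hqd)

set_option maxHeartbeats 1000000 in
lemma partial_bound (hα0 : 0 < α) (hq0 : q 0 = 1) (hqpos : ∀ s, 0 < q s)
    (hqb : ∀ s₁ s₂ : ℕ, 0 < s₁ → 0 < s₂ →
      q s₁ * q (s₂ - 1) < q (s₁ + s₂) ∧ q (s₁ + s₂) ≤ q s₁ * q s₂)
    (hqd : ∑' j : ℕ, (q j : ℝ) * α ^ (j + 1) = 1)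
    {b : ℕ → ℕ} (hb : ∀ t, b t ≤ 1) (n : ℕ) :
    |(∑' i : ℕ, caTerm α q b i) - ∑ i ∈ Finset.range n, caTerm α q b i| ≤ tailQ α q n := by
  have hs := summable_caTerm hα0 hq0 hqpos hqb hqd hb
  have hsplit := Summable.sum_add_tsum_nat_add n hs
  have heq : (∑' i : ℕ, caTerm α q b i) - ∑ i ∈ Finset.range n, caTerm α q b i
      = ∑' i : ℕ, caTerm α q b (i + n) := by
    rw [← hsplit]; ring
  rw [heq]
  have hs1 : Summable (fun i => caTerm α q b (i + n)) := (summable_nat_add_iff n).2 hs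
  have hs2 : Summable (fun i : ℕ => (q (i + n) : ℝ) * α ^ (i + n + 1)) :=
    (summable_nat_add_iff n).2 (summable_qa hα0 hqd)
  rw [abs_of_nonneg (tsum_nonneg fun i => caTerm_nonneg hα0 hqpos b _)]
  exact Summable.tsum_le_tsum (fun i => caTerm_le hα0 hq0 hqpos hqb hb (i + n)) hs1 hs2

end CA

namespace CA

lemma binDigit_le_one (x : ℝ) (i : ℕ) : binDigit x i ≤ 1 := by
  unfold binDigit
  omega

lemma floor_scale {y : ℝ} {i n : ℕ} (hi : i ≤ n) :
    ⌊y * 2 ^ i⌋ = ⌊y * 2 ^ n⌋ / 2 ^ (n - i) := by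
  set F : ℤ := ⌊y * 2 ^ n⌋ with hF
  set d : ℤ := 2 ^ (n - i) with hd
  have hdpos : (0:ℤ) < d := by positivity
  have hmod1 : 0 ≤ F % d := Int.emod_nonneg F (by omega)
  have hmod2 : F % d < d := Int.emod_lt_of_pos F hdpos
  have hFd : d * (F / d) + F % d = F := Int.mul_ediv_add_emod F d
  have hle : (F : ℝ) ≤ y * 2 ^ n := Int.floor_le _
  have hlt : y * 2 ^ n < F + 1 := Int.lt_floor_add_one _
  have hpow : (2:ℝ) ^ i * (2:ℝ) ^ (n - i) = 2 ^ n := by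
    rw [← pow_add]
    congr 1
    omega
  have hdr : ((d:ℝ)) = 2 ^ (n - i) := by
    rw [hd]; push_cast; ring
  have hdrpos : (0:ℝ) < (d:ℝ) := by exact_mod_cast hdpos
  have hcast : (d:ℝ) * ((F / d : ℤ):ℝ) + ((F % d : ℤ):ℝ) = (F:ℝ) := by exact_mod_cast hFd
  have hm1R : (0:ℝ) ≤ ((F % d : ℤ):ℝ) := by exact_mod_cast hmod1
  have hm2R : ((F % d : ℤ):ℝ) ≤ (d:ℝ) - 1 := by
    have : F % d ≤ d - 1 := by omega
    exact_mod_cast this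
  have hyn : y * 2 ^ n = y * 2 ^ i * (d:ℝ) := by rw [hdr, mul_assoc, hpow]
  rw [Int.floor_eq_iff]
  constructor
  · nlinarith [hle, hyn, hcast, hm1R, hdrpos]
  · push_cast
    nlinarith [hlt, hyn, hcast, hm2R, hdrpos]

lemma binDigit_agree {x y : ℝ} {n : ℕ} (h : ⌊y * 2 ^ n⌋ = ⌊x * 2 ^ n⌋)
    {i : ℕ} (hi : i ≤ n) : binDigit y i = binDigit x i := by
  unfold binDigit
  rw [floor_scale hi, floor_scale hi, h]

lemma binDigit_dyadic_zero {x : ℝ} {n : ℕ} {K : ℤ} (hK : x * 2 ^ n = (K : ℝ))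
    {i : ℕ} (hi : n < i) : binDigit x i = 0 := by
  unfold binDigit
  have hx : x * 2 ^ i = ((K * 2 ^ (i - n) : ℤ) : ℝ) := by
    have : x * 2 ^ i = (x * 2 ^ n) * 2 ^ (i - n) := by
      rw [mul_assoc, ← pow_add]
      congr 2
      omega
    rw [this, hK]
    push_cast
    ring
  rw [hx, Int.floor_intCast]
  have he : K * 2 ^ (i - n) = 2 * (K * 2 ^ (i - n - 1)) := by
    have : (2:ℤ) ^ (i - n) = 2 * 2 ^ (i - n - 1) := by
      rw [← pow_succ']
      congr 1
      omega
    rw [this]; ring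
  rw [he]
  omega

lemma int_div_helper1 (c d : ℤ) (hd : 0 < d) : (c * d - 1) / d = c - 1 := by
  have h : c * d - 1 = (d - 1) + (c - 1) * d := by ring
  rw [h, Int.add_mul_ediv_right _ _ (by omega : d ≠ 0),
    Int.ediv_eq_zero_of_lt (by omega) (by omega), zero_add]

lemma int_div_helper2 (A d : ℤ) (hd : 0 < d) (hnd : ¬ d ∣ A) : (A - 1) / d = A / d := by
  have h1 : A % d ≠ 0 := fun h => hnd (Int.dvd_of_emod_eq_zero h)
  have h2 : 0 ≤ A % d := Int.emod_nonneg A (by omega)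
  have h3 : A % d < d := Int.emod_lt_of_pos A hd
  have hFd : d * (A / d) + A % d = A := Int.mul_ediv_add_emod A d
  have h : A - 1 = (A % d - 1) + (A / d) * d := by rw [mul_comm (A/d) d]; omega
  rw [h, Int.add_mul_ediv_right _ _ (by omega : d ≠ 0),
    Int.ediv_eq_zero_of_lt (by omega) (by omega), zero_add]

/-- Digits of points just below a dyadic point `x = K/2^j` (with `K` odd):
for `y ∈ [x - 2^{-m}, x)` the first `m` digits of `y` are those of `x` below
position `j`, then `0` at `j`, then all `1`s up to `m`. -/
lemma left_digits {x y : ℝ} {j m : ℕ} {K : ℤ} (hK : x * 2 ^ j = (K : ℝ))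
    (hKodd : K % 2 = 1) (hKpos : 0 < K) (hj : 1 ≤ j) (hjm : j ≤ m)
    (hy1 : x - 1 / 2 ^ m ≤ y) (hy2 : y < x) :
    (∀ i, i < j → binDigit y i = binDigit x i) ∧ binDigit y j = 0 ∧
      (∀ i, j < i → i ≤ m → binDigit y i = 1) := by
  have hfloorm : ⌊y * 2 ^ m⌋ = K * 2 ^ (m - j) - 1 := by
    have hxm : x * 2 ^ m = ((K * 2 ^ (m - j) : ℤ) : ℝ) := by
      have : x * 2 ^ m = (x * 2 ^ j) * 2 ^ (m - j) := by
        rw [mul_assoc, ← pow_add]; congr 2; omega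
      rw [this, hK]; push_cast; ring
    rw [Int.floor_eq_iff]
    constructor
    · push_cast
      have h2m : (0:ℝ) < 2 ^ m := by positivity
      have : x * 2 ^ m - 1 ≤ y * 2 ^ m := by
        have := mul_le_mul_of_nonneg_right hy1 (le_of_lt h2m)
        calc x * 2 ^ m - 1 = (x - 1 / 2 ^ m) * 2 ^ m := by field_simp
          _ ≤ y * 2 ^ m := this
      rw [hxm] at this
      push_cast at this
      linarith
    · push_cast
      have h2m : (0:ℝ) < 2 ^ m := by positivity
      have : y * 2 ^ m < x * 2 ^ m := by
        exact mul_lt_mul_of_pos_right hy2 h2m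
      rw [hxm] at this
      push_cast at this
      linarith
  refine ⟨?_, ?_, ?_⟩
  · -- digits below j agree with x
    intro i hij
    unfold binDigit
    rw [floor_scale (by omega : i ≤ m), hfloorm,
      floor_scale (by omega : i ≤ j)]
    have hxj : ⌊x * 2 ^ j⌋ = K := by rw [hK, Int.floor_intCast]
    rw [hxj]
    have hnd : ¬ ((2:ℤ) ^ (m - i)) ∣ K * 2 ^ (m - j) := by
      intro hdvd
      have h1 : ((2:ℤ) ^ (m - j)) * 2 ^ (j - i) = 2 ^ (m - i) := by
        rw [← pow_add]; congr 1; omega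
      rw [← h1] at hdvd
      rw [mul_comm (K) _] at hdvd
      have h2 : ((2:ℤ) ^ (j - i)) ∣ K := by
        rcases hdvd with ⟨c, hc⟩
        refine ⟨c, ?_⟩
        have h2mj : (0:ℤ) < 2 ^ (m - j) := by positivity
        have := hc
        rw [mul_assoc] at this
        exact mul_left_cancel₀ (by omega) this
      have h3 : (2:ℤ) ∣ K := dvd_trans (dvd_pow_self 2 (by omega : j - i ≠ 0)) h2
      omega
    rw [int_div_helper2 _ _ (by positivity) hnd]
    have hcan : K * 2 ^ (m - j) / 2 ^ (m - i) = K / 2 ^ (j - i) := by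
      have h1 : ((2:ℤ) ^ (m - i)) = 2 ^ (m - j) * 2 ^ (j - i) := by
        rw [← pow_add]; congr 1; omega
      rw [h1, mul_comm (K) _, Int.mul_ediv_mul_of_pos _ _ (by positivity : (0:ℤ) < 2 ^ (m - j))]
    rw [hcan]
  · -- digit at j is 0
    unfold binDigit
    rw [floor_scale hjm, hfloorm,
      int_div_helper1 K ((2:ℤ) ^ (m - j)) (by positivity)]
    omega
  · -- digits in (j, m] are 1
    intro i hji him
    unfold binDigit
    rw [floor_scale him, hfloorm]
    have h1 : K * 2 ^ (m - j) = (K * 2 ^ (i - j)) * 2 ^ (m - i) := by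
      rw [mul_assoc, ← pow_add]; congr 2; omega
    rw [h1, int_div_helper1 _ ((2:ℤ) ^ (m - i)) (by positivity)]
    have he : K * 2 ^ (i - j) = 2 * (K * 2 ^ (i - j - 1)) := by
      have : (2:ℤ) ^ (i - j) = 2 * 2 ^ (i - j - 1) := by
        rw [← pow_succ']; congr 1; omega
      rw [this]; ring
    have hpos : 1 ≤ K * 2 ^ (i - j - 1) := by
      have : (1:ℤ) ≤ 2 ^ (i - j - 1) := one_le_pow₀ (by omega)
      nlinarith
    omega

end CA

namespace CA
variable {α : ℝ} {q : ℕ → ℕ}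

lemma partial_congr {b c : ℕ → ℕ} {n : ℕ} (h : ∀ t, 1 ≤ t → t ≤ n → b t = c t) :
    ∑ i ∈ Finset.range n, caTerm α q b i = ∑ i ∈ Finset.range n, caTerm α q c i := by
  apply Finset.sum_congr rfl
  intro i hi
  simp only [Finset.mem_range] at hi
  unfold caTerm
  rw [h (i+1) (by omega) (by omega), rWeight_congr q (fun t ht1 ht2 => h t ht1 (by omega))]

lemma partial_allones (hq0 : q 0 = 1) {b : ℕ → ℕ} {n : ℕ}
    (h : ∀ t, 1 ≤ t → t ≤ n → b t = 1) :
    ∑ i ∈ Finset.range n, caTerm α q b i = ∑ i ∈ Finset.range n, (q i : ℝ) * α ^ (i + 1) := by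
  apply Finset.sum_congr rfl
  intro i hi
  simp only [Finset.mem_range] at hi
  unfold caTerm
  rw [h (i+1) (by omega) (by omega)]
  have hr : rWeight q b (i + 1) = (q i : ℝ) := by
    rcases Nat.eq_zero_or_pos i with hi0 | hi0
    · subst hi0
      rw [rWeight_one, hq0]
      norm_num
    · rw [rWeight_run q (le_refl 1) hi0 (Or.inl rfl) (fun t ht1 ht2 => h t ht1 (by omega)),
        rWeight_one, one_mul, show i + 1 - 1 = i from rfl]
  rw [hr]
  push_cast
  ring

lemma tsum_eq_partial {b : ℕ → ℕ} {n : ℕ} (hα0 : 0 < α) (hq0 : q 0 = 1)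
    (hqpos : ∀ s, 0 < q s)
    (hqb : ∀ s₁ s₂ : ℕ, 0 < s₁ → 0 < s₂ →
      q s₁ * q (s₂ - 1) < q (s₁ + s₂) ∧ q (s₁ + s₂) ≤ q s₁ * q s₂)
    (hqd : ∑' j : ℕ, (q j : ℝ) * α ^ (j + 1) = 1)
    (hb : ∀ t, b t ≤ 1) (hvan : ∀ t, n < t → b t = 0) :
    ∑' i : ℕ, caTerm α q b i = ∑ i ∈ Finset.range n, caTerm α q b i := by
  have hs := summable_caTerm hα0 hq0 hqpos hqb hqd hb
  have hsplit := Summable.sum_add_tsum_nat_add (f := fun i => caTerm α q b i) n hs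
  have hz : ∑' i : ℕ, caTerm α q b (i + n) = 0 := by
    have : ∀ i : ℕ, caTerm α q b (i + n) = 0 := by
      intro i
      unfold caTerm
      rw [hvan (i + n + 1) (by omega)]
      norm_num
    rw [tsum_congr this, tsum_zero]
  rw [← hsplit, hz, add_zero]

/-- The key computation at dyadic points. -/
lemma dyadic_partial (hα0 : 0 < α) (hq0 : q 0 = 1) (hqpos : ∀ s, 0 < q s)
    (hqd : ∑' j : ℕ, (q j : ℝ) * α ^ (j + 1) = 1)
    {b c : ℕ → ℕ} {j m : ℕ} (hj : 1 ≤ j) (hjm : j ≤ m)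
    (hagree : ∀ t, 1 ≤ t → t < j → c t = b t)
    (hbj : b j = 1) (hbz : ∀ t, j < t → b t = 0)
    (hcj : c j = 0) (hc1 : ∀ t, j < t → t ≤ m → c t = 1) :
    ∑ i ∈ Finset.range m, caTerm α q c i
      = ∑ i ∈ Finset.range m, caTerm α q b i
        - rWeight q b j * α ^ j * tailQ α q (m - j) := by
  obtain ⟨J, rfl⟩ : ∃ J, j = J + 1 := ⟨j - 1, by omega⟩
  set j := J + 1 with hjdef
  have hrange : Finset.range m = Finset.range j ∪ Finset.Ico j m := by
    simp only [Finset.range_eq_Ico]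
    exact (Finset.Ico_union_Ico_eq_Ico (Nat.zero_le j) hjm).symm
  have hbsum : ∑ i ∈ Finset.range m, caTerm α q b i = ∑ i ∈ Finset.range j, caTerm α q b i := by
    symm
    apply Finset.sum_subset (by rw [Finset.range_subset_range]; omega)
    intro i hi hni
    simp only [Finset.mem_range] at hi hni
    unfold caTerm
    rw [hbz (i+1) (by omega)]
    norm_num
  have hbsum2 : ∑ i ∈ Finset.range j, caTerm α q b i
      = ∑ i ∈ Finset.range J, caTerm α q b i + rWeight q b j * α ^ j := by
    rw [Finset.sum_range_succ]
    congr 1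
    unfold caTerm
    rw [hbj]
    push_cast
    ring
  have hrwc : rWeight q c (j + 1) = rWeight q b j := by
    rw [rWeight_succ_zero q hj hcj]
    exact rWeight_congr q (fun t ht1 ht2 => hagree t ht1 ht2)
  have hcsum : ∑ i ∈ Finset.range m, caTerm α q c i
      = ∑ i ∈ Finset.range J, caTerm α q b i
        + rWeight q b j * α ^ j * (1 - tailQ α q (m - j)) := by
    rw [hrange, Finset.sum_union (by
      simp only [Finset.range_eq_Ico]
      exact Finset.Ico_disjoint_Ico_consecutive 0 j m)]
    have hpart1 : ∑ i ∈ Finset.range j, caTerm α q c i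
        = ∑ i ∈ Finset.range J, caTerm α q b i := by
      rw [Finset.sum_range_succ]
      have hlast : caTerm α q c J = 0 := by
        unfold caTerm
        rw [hcj]
        norm_num
      rw [hlast, add_zero]
      exact partial_congr (fun t ht1 ht2 => hagree t ht1 (by omega))
    have hpart2 : ∑ i ∈ Finset.Ico j m, caTerm α q c i
        = rWeight q b j * α ^ j * (1 - tailQ α q (m - j)) := by
      have hterm : ∀ i ∈ Finset.Ico j m,
          caTerm α q c i = rWeight q b j * ((q (i - j) : ℝ) * α ^ (i + 1)) := by
        intro i hi
        simp only [Finset.mem_Ico] at hi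
        unfold caTerm
        rw [hc1 (i+1) (by omega) (by omega)]
        have hrw : rWeight q c (i + 1) = rWeight q b j * (q (i - j) : ℝ) := by
          rcases Nat.eq_or_lt_of_le hi.1 with he | hl
          · have hij : i = j := he.symm
            rw [hij, Nat.sub_self, hq0, hrwc]
            norm_num
          · rw [rWeight_run q (by omega : 1 ≤ j + 1) (by omega : j + 1 ≤ i)
              (Or.inr (by rw [show j + 1 - 1 = j from rfl]; exact hcj))
              (fun t ht1 ht2 => hc1 t (by omega) (by omega)), hrwc]
            have he2 : i + 1 - (j + 1) = i - j := by omega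
            rw [he2]
        rw [hrw]
        push_cast
        ring
      have hIco : ∑ i ∈ Finset.Ico j m, (q (i - j) : ℝ) * α ^ (i + 1)
          = α ^ j * (1 - tailQ α q (m - j)) := by
        rw [Finset.sum_Ico_eq_sum_range]
        have hre : ∀ t ∈ Finset.range (m - j),
            (q (j + t - j) : ℝ) * α ^ (j + t + 1) = α ^ j * ((q t : ℝ) * α ^ (t + 1)) := by
          intro t _
          rw [show j + t - j = t by omega, show j + t + 1 = j + (t + 1) by omega, pow_add]
          ring
        rw [Finset.sum_congr rfl hre, ← Finset.mul_sum]
        have := tailQ_split hα0 hqd (m - j)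
        have hsum : ∑ i ∈ Finset.range (m - j), (q i : ℝ) * α ^ (i + 1) = 1 - tailQ α q (m - j) := by
          linarith
        rw [hsum]
      rw [Finset.sum_congr rfl hterm, ← Finset.mul_sum, hIco]
      ring
    rw [hpart1, hpart2]
  rw [hcsum, hbsum, hbsum2]
  ring

end CA

namespace CA
variable {α : ℝ} {q : ℕ → ℕ}

lemma binDigit_near_one {y : ℝ} {n i : ℕ} (h1 : 1 - 1 / 2 ^ n ≤ y) (h2 : y < 1)
    (hi1 : 1 ≤ i) (hin : i ≤ n) : binDigit y i = 1 := by
  unfold binDigit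
  have hfl : ⌊y * 2 ^ i⌋ = 2 ^ i - 1 := by
    rw [Int.floor_eq_iff]
    have h2i : (0:ℝ) < 2 ^ i := by positivity
    have hpow : (2:ℝ) ^ i ≤ 2 ^ n := by
      apply pow_le_pow_right₀ (by norm_num) hin
    constructor
    · push_cast
      have hthis : (1 - 1 / 2 ^ n) * 2 ^ i ≤ y * 2 ^ i := by
        apply mul_le_mul_of_nonneg_right h1 (le_of_lt h2i)
      have h2n : (0:ℝ) < 2 ^ n := by positivity
      have hq : (2:ℝ) ^ i / 2 ^ n ≤ 1 := by
        rw [div_le_one h2n]; exact hpow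
      have e1 : (1 - 1/2^n) * (2:ℝ)^i = 2^i - 2^i/2^n := by ring
      rw [e1] at hthis
      linarith
    · push_cast
      nlinarith
  rw [hfl]
  have h2e : (2:ℤ) ^ i = 2 * 2 ^ (i - 1) := by
    rw [← pow_succ']; congr 1; omega
  have hp : (1:ℤ) ≤ 2 ^ (i - 1) := one_le_pow₀ (by omega)
  omega

section Estimates

variable (hα0 : 0 < α) (hq0 : q 0 = 1) (hqpos : ∀ s, 0 < q s)
    (hqb : ∀ s₁ s₂ : ℕ, 0 < s₁ → 0 < s₂ →
      q s₁ * q (s₂ - 1) < q (s₁ + s₂) ∧ q (s₁ + s₂) ≤ q s₁ * q s₂)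
    (hqd : ∑' j : ℕ, (q j : ℝ) * α ^ (j + 1) = 1)

include hα0 hq0 hqpos hqb hqd

/-- Estimate when `x` and `y` share their first `n` binary digits. -/
lemma est_same_floor {x y : ℝ} (hx1 : x ≠ 1) (hy1 : y ≠ 1) {n : ℕ}
    (hfl : ⌊y * 2 ^ n⌋ = ⌊x * 2 ^ n⌋) :
    |fCA α q y - fCA α q x| ≤ 2 * tailQ α q n := by
  rw [fCA_eq hx1, fCA_eq hy1]
  have hbx := partial_bound hα0 hq0 hqpos hqb hqd (binDigit_le_one x) n
  have hby := partial_bound hα0 hq0 hqpos hqb hqd (binDigit_le_one y) n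
  have hS : ∑ i ∈ Finset.range n, caTerm α q (binDigit y) i
      = ∑ i ∈ Finset.range n, caTerm α q (binDigit x) i :=
    partial_congr (fun t ht1 ht2 => binDigit_agree hfl ht2)
  rw [abs_sub_le_iff] at hbx hby
  rw [abs_sub_le_iff]
  constructor <;> linarith [hbx.1, hbx.2, hby.1, hby.2]

/-- Estimate near `1`. -/
lemma est_near_one {y : ℝ} {n : ℕ} (h1 : 1 - 1 / 2 ^ n ≤ y) (h2 : y < 1) :
    |fCA α q y - 1| ≤ 2 * tailQ α q n := by
  rw [fCA_eq (ne_of_lt h2)]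
  have hby := partial_bound hα0 hq0 hqpos hqb hqd (binDigit_le_one y) n
  have hS : ∑ i ∈ Finset.range n, caTerm α q (binDigit y) i = 1 - tailQ α q n := by
    rw [partial_allones hq0 (fun t ht1 ht2 => binDigit_near_one h1 h2 ht1 ht2)]
    have := tailQ_split hα0 hqd n
    linarith
  rw [abs_sub_le_iff] at hby
  rw [hS] at hby
  rw [abs_sub_le_iff]
  have htn : 0 ≤ tailQ α q n := tailQ_nonneg hα0 hqpos n
  constructor <;> linarith [hby.1, hby.2]

/-- Estimate to the left of a dyadic point. -/
lemma est_left_dyadic {x y : ℝ} {j m : ℕ} {K : ℤ} (hK : x * 2 ^ j = (K : ℝ))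
    (hKodd : K % 2 = 1) (hKpos : 0 < K) (hj : 1 ≤ j) (hjm : j ≤ m)
    (hy1 : x - 1 / 2 ^ m ≤ y) (hy2 : y < x) (hxle : x ≤ 1) :
    |fCA α q y - fCA α q x| ≤ tailQ α q m
      + rWeight q (binDigit x) j * α ^ j * tailQ α q (m - j) := by
  have hx1 : x ≠ 1 := by
    intro h
    subst h
    rw [one_mul] at hK
    have : (2:ℤ) ^ j = K := by exact_mod_cast hK
    have h2e : (2:ℤ) ^ j = 2 * 2 ^ (j - 1) := by
      rw [← pow_succ']; congr 1; omega
    omega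
  have hy1' : y ≠ 1 := ne_of_lt (lt_of_lt_of_le hy2 hxle)
  obtain ⟨hagree, hcj, hc1⟩ := left_digits hK hKodd hKpos hj hjm hy1 hy2
  have hbj : binDigit x j = 1 := by
    unfold binDigit
    rw [hK, Int.floor_intCast]
    omega
  have hbz : ∀ t, j < t → binDigit x t = 0 := fun t ht => binDigit_dyadic_zero hK ht
  have hfx : fCA α q x = ∑ i ∈ Finset.range m, caTerm α q (binDigit x) i := by
    rw [fCA_eq hx1]
    exact tsum_eq_partial hα0 hq0 hqpos hqb hqd (binDigit_le_one x)
      (fun t ht => hbz t (by omega))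
  have hdy := dyadic_partial hα0 hq0 hqpos hqd hj hjm
    (fun t ht1 ht2 => hagree t ht2) hbj hbz hcj (fun t ht1 ht2 => hc1 t ht1 ht2)
  have hby := partial_bound hα0 hq0 hqpos hqb hqd (binDigit_le_one y) m
  rw [fCA_eq hy1'] at *
  rw [hfx]
  rw [abs_sub_le_iff] at hby
  have htn : 0 ≤ tailQ α q (m - j) := tailQ_nonneg hα0 hqpos (m - j)
  have hrw : (0:ℝ) ≤ rWeight q (binDigit x) j * α ^ j := by
    have := rWeight_ge_one q (binDigit x) hqpos j
    positivity
  rw [abs_sub_le_iff]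
  constructor <;> nlinarith [hby.1, hby.2, hdy]

end Estimates

end CA

open CA in
/-- Part (ii) of the singularity criterion: f is continuous on [0,1]. -/
theorem fCA_continuousOn (α : ℝ) (hα0 : 0 < α) (hα : α < 1/2)
    (q : ℕ → ℕ) (hq0 : q 0 = 1) (hqpos : ∀ s, 0 < q s)
    (hqb : ∀ s₁ s₂ : ℕ, 0 < s₁ → 0 < s₂ →
      q s₁ * q (s₂ - 1) < q (s₁ + s₂) ∧ q (s₁ + s₂) ≤ q s₁ * q s₂)
    (hqc : ∀ s : ℕ, 0 < s →
      (q (s + 1) : ℝ) * α ^ (s + 2) < (q s : ℝ) * α ^ (s + 1) ∧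
      (q s : ℝ) * α ^ (s + 1) < ∑' j : ℕ, (q (s + 1 + j) : ℝ) * α ^ (s + 2 + j))
    (hqd : ∑' j : ℕ, (q j : ℝ) * α ^ (j + 1) = 1)
    : ContinuousOn (fCA α q) (Set.Icc 0 1) := by
  classical
  intro x hx
  rw [Metric.continuousWithinAt_iff]
  intro ε hε
  obtain ⟨hx0, hxle⟩ := hx
  have htt : Filter.Tendsto (tailQ α q) Filter.atTop (nhds 0) := tailQ_tendsto
  have htn : ∀ n, 0 ≤ tailQ α q n := tailQ_nonneg hα0 hqpos
  rcases eq_or_lt_of_le hxle with hx1 | hx1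
  · -- x = 1
    subst hx1
    obtain ⟨N, hN⟩ := Filter.eventually_atTop.mp
      (htt.eventually_lt_const (show (0:ℝ) < ε/3 by linarith))
    refine ⟨1/2^N, by positivity, ?_⟩
    intro y hy hdist
    rw [Real.dist_eq] at hdist
    rw [Real.dist_eq]
    have hf1 : fCA α q 1 = 1 := by simp [fCA]
    rcases eq_or_lt_of_le hy.2 with hy1 | hy1
    · subst hy1
      simpa [hf1] using hε
    · have h1 : 1 - 1/2^N ≤ y := by
        have := abs_lt.mp hdist
        linarith [this.1]
      have hest := est_near_one hα0 hq0 hqpos hqb hqd h1 hy1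
      have hτ := hN N (le_refl N)
      rw [hf1]
      calc |fCA α q y - 1| ≤ 2 * tailQ α q N := hest
        _ < ε := by linarith
  · -- x < 1
    obtain ⟨N, hN⟩ := Filter.eventually_atTop.mp
      (htt.eventually_lt_const (show (0:ℝ) < ε/3 by linarith))
    set k : ℤ := ⌊x * 2 ^ N⌋ with hk
    have h2N : (0:ℝ) < 2 ^ N := by positivity
    have hkle : (k:ℝ) ≤ x * 2 ^ N := Int.floor_le _
    have hklt : x * 2 ^ N < (k:ℝ) + 1 := Int.lt_floor_add_one _
    have hk2 : (k:ℝ) + 1 ≤ 2 ^ N := by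
      have h1 : x * 2 ^ N < 2 ^ N := by nlinarith
      have h2 : (k:ℝ) < ((2^N : ℤ) : ℝ) := by
        push_cast
        linarith
      have h3 : k < 2^N := by exact_mod_cast h2
      have h4 : k + 1 ≤ 2^N := h3
      calc (k:ℝ) + 1 = ((k + 1 : ℤ) : ℝ) := by push_cast; ring
        _ ≤ ((2^N : ℤ) : ℝ) := by exact_mod_cast h4
        _ = 2 ^ N := by push_cast; ring
    have hright : ∀ y ∈ Set.Icc (0:ℝ) 1, x ≤ y → y - x < ((k:ℝ)+1)/2^N - x →
        |fCA α q y - fCA α q x| < ε := by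
      intro y _ hxy hyd
      have hylt : y < ((k:ℝ)+1)/2^N := by linarith
      have hy2N : y * 2^N < (k:ℝ) + 1 := by
        have := mul_lt_mul_of_pos_right hylt h2N
        rwa [div_mul_cancel₀ _ (ne_of_gt h2N)] at this
      have hyge : (k:ℝ) ≤ y * 2^N :=
        le_trans hkle (mul_le_mul_of_nonneg_right hxy h2N.le)
      have hfl : ⌊y * 2^N⌋ = k := Int.floor_eq_iff.mpr ⟨hyge, hy2N⟩
      have hle1 : ((k:ℝ)+1)/2^N ≤ 1 := by
        rw [div_le_one h2N]
        exact hk2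
      have hy1 : y ≠ 1 := ne_of_lt (lt_of_lt_of_le hylt hle1)
      have hest := est_same_floor hα0 hq0 hqpos hqb hqd (ne_of_lt hx1) hy1 hfl
      have hτ := hN N (le_refl N)
      calc |fCA α q y - fCA α q x| ≤ 2 * tailQ α q N := hest
        _ < ε := by linarith
    have hleft : ∃ δl : ℝ, 0 < δl ∧ ∀ y ∈ Set.Icc (0:ℝ) 1, y < x → x - y < δl →
        |fCA α q y - fCA α q x| < ε := by
      rcases eq_or_lt_of_le hx0 with hx0' | hx0'
      · refine ⟨1, one_pos, ?_⟩
        intro y hy hyx _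
        exact absurd (lt_of_lt_of_le hyx (le_of_eq hx0'.symm)) (not_lt.mpr hy.1)
      · by_cases hdy : ∃ p : ℕ, ∃ K : ℤ, x * 2 ^ p = (K:ℝ)
        · -- x is dyadic
          set j := Nat.find hdy with hjdef
          obtain ⟨K, hK⟩ : ∃ K : ℤ, x * 2 ^ j = (K:ℝ) := Nat.find_spec hdy
          have hj1 : 1 ≤ j := by
            by_contra h
            have hj0 : j = 0 := by omega
            rw [hj0] at hK
            simp only [pow_zero, mul_one] at hK
            have h1 : (0:ℝ) < (K:ℝ) := hK ▸ hx0'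
            have h2 : (K:ℝ) < 1 := hK ▸ hx1
            have h3 : 0 < K := by exact_mod_cast h1
            have h4 : K < 1 := by exact_mod_cast h2
            omega
          have hKpos : 0 < K := by
            have h1 : (0:ℝ) < (K:ℝ) := by
              rw [← hK]
              exact mul_pos hx0' (by positivity)
            exact_mod_cast h1
          have hKodd : K % 2 = 1 := by
            rcases Int.even_or_odd K with he | ho
            · exfalso
              obtain ⟨L, hL⟩ := he
              have hmin := Nat.find_min hdy (show j - 1 < j by omega)
              apply hmin
              refine ⟨L, ?_⟩
              have h2 : x * 2 ^ j = x * 2 ^ (j-1) * 2 := by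
                rw [mul_assoc, ← pow_succ]
                congr 2
                omega
              rw [h2] at hK
              have h3 : x * 2 ^ (j-1) * 2 = (L:ℝ) + (L:ℝ) := by
                rw [hK, hL]
                push_cast
                ring
              linarith
            · exact Int.odd_iff.mp ho
          set C := rWeight q (binDigit x) j * α ^ j with hC
          have hC0 : 0 ≤ C := by
            have := rWeight_ge_one q (binDigit x) hqpos j
            positivity
          obtain ⟨N₁, hN₁⟩ := Filter.eventually_atTop.mp
            (htt.eventually_lt_const (show (0:ℝ) < ε/2 by linarith))
          obtain ⟨N₂, hN₂⟩ := Filter.eventually_atTop.mp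
            (htt.eventually_lt_const (show (0:ℝ) < ε/(2*(C+1)) by positivity))
          set m := N₁ + N₂ + j with hm
          refine ⟨1/2^m, by positivity, ?_⟩
          intro y _ hyx hyd
          have hest := est_left_dyadic hα0 hq0 hqpos hqb hqd hK hKodd hKpos hj1
            (by omega : j ≤ m) (by linarith : x - 1/2^m ≤ y) hyx hxle
          have t1 : tailQ α q m < ε/2 := hN₁ m (by omega)
          have t2 : tailQ α q (m - j) < ε/(2*(C+1)) := hN₂ (m - j) (by omega)
          have t3 : C * tailQ α q (m-j) ≤ (C+1) * tailQ α q (m-j) := by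
            nlinarith [htn (m-j)]
          have t4 : (C+1) * tailQ α q (m-j) < (C+1) * (ε/(2*(C+1))) :=
            mul_lt_mul_of_pos_left t2 (by linarith)
          have t5 : (C+1) * (ε/(2*(C+1))) = ε/2 := by
            field_simp
          calc |fCA α q y - fCA α q x|
              ≤ tailQ α q m + C * tailQ α q (m - j) := hest
            _ < ε := by linarith
        · -- x is not dyadic
          have hklt' : (k:ℝ) < x * 2^N := by
            rcases lt_or_eq_of_le hkle with h | h
            · exact h
            · exact absurd ⟨N, k, h.symm⟩ hdy
          have hδ : (k:ℝ)/2^N < x := by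
            rw [div_lt_iff₀ h2N]
            exact hklt'
          refine ⟨x - (k:ℝ)/2^N, by linarith, ?_⟩
          intro y _ hyx hyd
          have hygt : (k:ℝ)/2^N < y := by linarith
          have hyge : (k:ℝ) ≤ y * 2^N := le_of_lt ((div_lt_iff₀ h2N).mp hygt)
          have hylt : y * 2^N < (k:ℝ) + 1 :=
            lt_trans (mul_lt_mul_of_pos_right hyx h2N) hklt
          have hfl : ⌊y * 2^N⌋ = k := Int.floor_eq_iff.mpr ⟨hyge, hylt⟩
          have hy1 : y ≠ 1 := ne_of_lt (lt_trans hyx hx1)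
          have hest := est_same_floor hα0 hq0 hqpos hqb hqd (ne_of_lt hx1) hy1 hfl
          have hτ := hN N (le_refl N)
          calc |fCA α q y - fCA α q x| ≤ 2 * tailQ α q N := hest
            _ < ε := by linarith
    obtain ⟨δl, hδl, hleft'⟩ := hleft
    have hδr : 0 < ((k:ℝ)+1)/2^N - x := by
      have : x < ((k:ℝ)+1)/2^N := by
        rw [lt_div_iff₀ h2N]
        linarith
      linarith
    refine ⟨min (((k:ℝ)+1)/2^N - x) δl, lt_min hδr hδl, ?_⟩
    intro y hy hdist
    rw [Real.dist_eq] at hdist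
    rw [Real.dist_eq]
    rcases le_or_gt x y with hxy | hxy
    · apply hright y hy hxy
      have h1 : y - x ≤ |y - x| := le_abs_self _
      have h2 : |y - x| < ((k:ℝ)+1)/2^N - x := lt_of_lt_of_le hdist (min_le_left _ _)
      linarith
    · apply hleft' y hy hxy
      have h1 : x - y ≤ |y - x| := by
        rw [abs_sub_comm]
        exact le_abs_self _
      have h2 : |y - x| < δl := lt_of_lt_of_le hdist (min_le_right _ _)
      linarith
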